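/- Dominant-strategy incentive compatibility of the fixed-k PAC mechanism (Theorem 1, DSIC part): assume the truthful report profile is the sorted valuation profile v and assume the PAC feasibility condition v_k/(n−k) ≤ B/k. Then for every client i and every nonnegative misreport r′, the client's utility under the unilateral deviation profile (r′, v_{−i}) is at most its utility under the truthful profile v: u_i(r′, v_{−i}) ≤ u_i(v). In particular, truthful reporting is a dominant strategy. -/

import Mathlib

open Classical

/-- The `j`-th smallest report (0-indexed) of a report profile `r : Fin n → ℝ`:
the entry at index `j` of the list sorting the multiset of reports nondecreasingly. -/
noncomputable def orderStat (n : ℕ) (r : Fin n → ℝ) (j : ℕ) : ℝ :=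
  ((Finset.univ.val.map r).sort (· ≤ ·)).getD j 0

/-- Client `i` is a winner of the fixed-`k` PAC mechanism on report profile `r` iff
the number of indices `j` with `r j < r i`, or with `r j = r i` and `j ≤ i`, is at
most `k` (i.e. `i` is among the `k` smallest reports, ties broken by lower index). -/
noncomputable def isWinner (n k : ℕ) (r : Fin n → ℝ) (i : Fin n) : Prop :=
  (Finset.univ.filter (fun j : Fin n => r j < r i ∨ (r j = r i ∧ j ≤ i))).card ≤ k

/-- Utility of client `i` with true valuation `vi` under report profile `r` in the
fixed-`k` PAC mechanism with budget `B`: a winner is paid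
`min (B/k) (r_(k+1) / (n-k))` and incurs privacy cost `vi / (n-k)`; a loser gets `0`.
(The `(k+1)`-th smallest report is `orderStat n r k` with 0-based indexing.) -/
noncomputable def utilPAC (n k : ℕ) (B : ℝ) (vi : ℝ) (r : Fin n → ℝ) (i : Fin n) : ℝ :=
  if isWinner n k r i then
    min (B / k) (orderStat n r k / ((n : ℝ) - k)) - vi / ((n : ℝ) - k)
  else 0

/-- key counting lemma: if at least k+1 reports are ≤ c then the k-th order stat is ≤ c -/
lemma orderStat_le_of_count {n : ℕ} (r : Fin n → ℝ) (c : ℝ) (k : ℕ) (hk : k < n)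
    (hc : k + 1 ≤ (Finset.univ.filter (fun j => r j ≤ c)).card) :
    orderStat n r k ≤ c := by
  set l := ((Finset.univ.val.map r).sort (· ≤ ·)) with hl
  have hlen : l.length = n := by
    simp [hl]
  have hsorted : l.Pairwise (· ≤ ·) := Multiset.pairwise_sort _ _
  have hcount : l.countP (fun x => decide (x ≤ c)) =
      (Finset.univ.filter (fun j => r j ≤ c)).card := by
    have h' : (l : Multiset ℝ) = Finset.univ.val.map r := Multiset.sort_eq _ _
    rw [← Multiset.coe_countP, h', Multiset.countP_map]
    rw [Finset.card, ← Finset.filter_val]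
  by_contra h
  push_neg at h
  have hkl : k < l.length := hlen ▸ hk
  have hget : orderStat n r k = l.get ⟨k, hkl⟩ := by
    rw [orderStat, ← hl, List.getD_eq_getElem l 0 hkl]; rfl
  -- count elements ≤ c is at most k
  have hsplit : l.countP (fun x => decide (x ≤ c)) =
      (l.take k).countP (fun x => decide (x ≤ c)) + (l.drop k).countP (fun x => decide (x ≤ c)) := by
    conv_lhs => rw [← List.take_append_drop k l]
    exact List.countP_append
  have h1 : (l.take k).countP (fun x => decide (x ≤ c)) ≤ k := by
    calc (l.take k).countP (fun x => decide (x ≤ c)) ≤ (l.take k).length :=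
        List.countP_le_length
      _ ≤ k := by simp [List.length_take]
  have h2 : (l.drop k).countP (fun x => decide (x ≤ c)) = 0 := by
    rw [List.countP_eq_zero]
    intro a ha
    simp only [decide_eq_true_eq, not_le]
    obtain ⟨⟨j, hj⟩, rfl⟩ := List.mem_iff_get.1 ha
    have hjl : k + j < l.length := by
      have := (List.length_drop (i := k) (l := l)) ▸ hj; omega
    have hgd : (l.drop k).get ⟨j, hj⟩ = l.get ⟨k + j, hjl⟩ := by simp [List.getElem_drop]
    have hle : l.get ⟨k, hkl⟩ ≤ l.get ⟨k + j, hjl⟩ := by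
      rcases Nat.eq_or_lt_of_le (Nat.le_add_right k j) with heq | hlt
      · congr 1 <;> simp [← heq]
      · exact (List.pairwise_iff_get.1 hsorted) ⟨k, hkl⟩ ⟨k + j, hjl⟩ hlt
    rw [hgd]
    exact lt_of_lt_of_le (hget ▸ h) hle
  omega

/-- for monotone v, the order statistics are just the values -/
lemma orderStat_monotone {n : ℕ} (v : Fin n → ℝ) (hmono : Monotone v) (j : ℕ) (hj : j < n) :
    orderStat n v j = v ⟨j, hj⟩ := by
  have hperm : ((Finset.univ.val.map v).sort (· ≤ ·)) = List.ofFn v := by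
    refine (fun h1 h2 h3 => List.Perm.eq_of_pairwise' (r := (· ≤ ·)) h2 h3 h1) ?_ ?_ ?_
    · have : ((Finset.univ.val.map v).sort (· ≤ ·) : Multiset ℝ) = ↑(List.ofFn v) := by
        rw [Multiset.sort_eq, Fin.univ_val_map]
      exact Quotient.exact this
    · exact Multiset.pairwise_sort _ _
    · rw [List.ofFn_eq_map, List.pairwise_map]
      exact (List.pairwise_le_finRange n).imp (fun h => hmono h)
  have hjl : j < (List.ofFn v).length := by simpa using hj
  rw [orderStat, hperm, List.getD_eq_getElem _ 0 hjl, List.getElem_ofFn]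


/-- DSIC of the fixed-`k` PAC mechanism: if the truthful profile is the sorted
nonnegative valuation profile `v` and the PAC feasibility condition
`v k / (n-k) ≤ B/k` holds, then for every client `i` and every nonnegative
misreport `r'`, the utility under the unilateral deviation `(r', v_{-i})` is at
most the utility under truthful reporting; truthful reporting is dominant. -/
theorem pac_dsic
    (n k : ℕ) (hk : 1 ≤ k) (hkn : k < n)
    (B : ℝ) (hB : 0 < B)
    (v : Fin n → ℝ) (hmono : Monotone v) (hnn : ∀ i, 0 ≤ v i)
    (hfeas : v ⟨k - 1, by omega⟩ / ((n : ℝ) - k) ≤ B / k) :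
    ∀ (i : Fin n) (r' : ℝ), 0 ≤ r' →
      utilPAC n k B (v i) (Function.update v i r') i ≤ utilPAC n k B (v i) v i := by
  intro i r' hr'
  have hnk : (0:ℝ) < (n:ℝ) - k := by
    have : (k:ℝ) < n := by exact_mod_cast hkn
    linarith
  set w := Function.update v i r' with hw
  have hwne : ∀ j, j ≠ i → w j = v j := fun j hj => Function.update_of_ne hj _ _
  have hwi : w i = r' := Function.update_self i r' v
  have hvk : orderStat n v k = v ⟨k, hkn⟩ := orderStat_monotone v hmono k hkn
  by_cases hi : (i : ℕ) < k
  · -- i is a truthful winner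
    have hwinT : isWinner n k v i := by
      unfold isWinner
      have hsub : (Finset.univ.filter (fun j : Fin n => v j < v i ∨ (v j = v i ∧ j ≤ i)))
          ⊆ Finset.Iic i := by
        intro j hj
        rw [Finset.mem_filter] at hj
        rw [Finset.mem_Iic]
        rcases hj.2 with h | h
        · by_contra hc
          exact absurd (hmono (le_of_not_ge hc)) (not_le.2 h)
        · exact h.2
      calc (Finset.univ.filter (fun j : Fin n => v j < v i ∨ (v j = v i ∧ j ≤ i))).card
          ≤ (Finset.Iic i).card := Finset.card_le_card hsub
        _ = (i : ℕ) + 1 := Fin.card_Iic i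
        _ ≤ k := by omega
    have hik1 : (i : Fin n) ≤ ⟨k - 1, by omega⟩ := by
      rw [Fin.le_def]; simp; omega
    have hik : (i : Fin n) ≤ ⟨k, hkn⟩ := by
      rw [Fin.le_def]; simp; omega
    have h1 : v i / ((n:ℝ) - k) ≤ B / k := le_trans (by gcongr; exact hmono hik1) hfeas
    have h2 : v i / ((n:ℝ) - k) ≤ v ⟨k, hkn⟩ / ((n:ℝ) - k) := by gcongr; exact hmono hik
    have hTnn : 0 ≤ min (B / k) (v ⟨k, hkn⟩ / ((n:ℝ) - k)) - v i / ((n:ℝ) - k) := by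
      have := le_min h1 h2
      linarith
    by_cases hwinD : isWinner n k w i
    · have hr'k : r' ≤ v ⟨k, hkn⟩ := by
        by_contra hgt
        push_neg at hgt
        have hsub : Finset.Iic (⟨k, hkn⟩ : Fin n)
            ⊆ Finset.univ.filter (fun j : Fin n => w j < w i ∨ (w j = w i ∧ j ≤ i)) := by
          intro j hj
          rw [Finset.mem_filter]
          refine ⟨Finset.mem_univ _, ?_⟩
          by_cases hji : j = i
          · subst hji; exact Or.inr ⟨rfl, le_refl _⟩
          · left
            rw [hwne j hji, hwi]
            have : v j ≤ v ⟨k, hkn⟩ := hmono (Finset.mem_Iic.1 hj)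
            linarith
        have hcard := Finset.card_le_card hsub
        rw [Fin.card_Iic] at hcard
        unfold isWinner at hwinD
        simp only at hcard hwinD
        omega
      have hstat : orderStat n w k ≤ v ⟨k, hkn⟩ := by
        apply orderStat_le_of_count w _ k hkn
        have hsub : Finset.Iic (⟨k, hkn⟩ : Fin n)
            ⊆ Finset.univ.filter (fun j : Fin n => w j ≤ v ⟨k, hkn⟩) := by
          intro j hj
          rw [Finset.mem_filter]
          refine ⟨Finset.mem_univ _, ?_⟩
          by_cases hji : j = i
          · subst hji; rw [hwi]; exact hr'k
          · rw [hwne j hji]; exact hmono (Finset.mem_Iic.1 hj)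
        calc k + 1 = (Finset.Iic (⟨k, hkn⟩ : Fin n)).card := by simp [Fin.card_Iic]
          _ ≤ _ := Finset.card_le_card hsub
      rw [utilPAC, if_pos hwinD, utilPAC, if_pos hwinT, hvk]
      have hmin : min (B / k) (orderStat n w k / ((n:ℝ) - k))
          ≤ min (B / k) (v ⟨k, hkn⟩ / ((n:ℝ) - k)) := by
        apply min_le_min (le_refl _)
        gcongr
      linarith
    · rw [utilPAC, if_neg hwinD, utilPAC, if_pos hwinT, hvk]
      linarith
  · -- i is a truthful loser
    push_neg at hi
    have hloseT : ¬ isWinner n k v i := by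
      unfold isWinner
      push_neg
      have hsub : Finset.Iic i
          ⊆ Finset.univ.filter (fun j : Fin n => v j < v i ∨ (v j = v i ∧ j ≤ i)) := by
        intro j hj
        rw [Finset.mem_filter]
        refine ⟨Finset.mem_univ _, ?_⟩
        have hji := Finset.mem_Iic.1 hj
        rcases lt_or_eq_of_le (hmono hji) with h | h
        · exact Or.inl h
        · exact Or.inr ⟨h, hji⟩
      have hcard := Finset.card_le_card hsub
      rw [Fin.card_Iic] at hcard
      omega
    have hT : utilPAC n k B (v i) v i = 0 := by rw [utilPAC, if_neg hloseT]
    rw [hT]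
    by_cases hwinD : isWinner n k w i
    · have hr'i : r' ≤ v i := by
        by_contra hgt
        push_neg at hgt
        have hsub : Finset.Iic i
            ⊆ Finset.univ.filter (fun j : Fin n => w j < w i ∨ (w j = w i ∧ j ≤ i)) := by
          intro j hj
          rw [Finset.mem_filter]
          refine ⟨Finset.mem_univ _, ?_⟩
          by_cases hji : j = i
          · subst hji; exact Or.inr ⟨rfl, le_refl _⟩
          · left
            rw [hwne j hji, hwi]
            exact lt_of_le_of_lt (hmono (Finset.mem_Iic.1 hj)) hgt
        have hcard := Finset.card_le_card hsub
        rw [Fin.card_Iic] at hcard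
        unfold isWinner at hwinD
        omega
      have hstat : orderStat n w k ≤ v i := by
        apply orderStat_le_of_count w _ k hkn
        have hniIio : i ∉ Finset.Iio (⟨k, hkn⟩ : Fin n) := by
          rw [Finset.mem_Iio, Fin.lt_def]
          simp
          omega
        have hsub : insert i (Finset.Iio (⟨k, hkn⟩ : Fin n))
            ⊆ Finset.univ.filter (fun j : Fin n => w j ≤ v i) := by
          intro j hj
          rw [Finset.mem_insert] at hj
          rw [Finset.mem_filter]
          refine ⟨Finset.mem_univ _, ?_⟩
          rcases hj with rfl | hj
          · rw [hwi]; exact hr'i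
          · have hjk : (j : ℕ) < k := by
              have := Finset.mem_Iio.1 hj
              rw [Fin.lt_def] at this
              simpa using this
            have hji : j ≠ i := by
              intro hji; subst hji; omega
            rw [hwne j hji]
            exact hmono (by rw [Fin.le_def]; omega)
        calc k + 1 = (insert i (Finset.Iio (⟨k, hkn⟩ : Fin n))).card := by
              rw [Finset.card_insert_of_notMem hniIio, Fin.card_Iio]
          _ ≤ _ := Finset.card_le_card hsub
      rw [utilPAC, if_pos hwinD]
      have : min (B / k) (orderStat n w k / ((n:ℝ) - k)) ≤ v i / ((n:ℝ) - k) :=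
        le_trans (min_le_right _ _) (by gcongr)
      linarith
    · rw [utilPAC, if_neg hwinD]
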